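/- Let M be a real symmetric positive definite 2n×2n matrix with n×n blocks M = [[M_XX, M_XP],[M_PX, M_PP]] and let Ω := {z ∈ ℝ^{2n} : Mz·z ≤ ℏ}. Then Ω is a quantum blob (i.e. Ω = S(B^{2n}(√ℏ)) for some S ∈ Sp(n), equivalently M = (SSᵀ)⁻¹ with S ∈ Sp(n), equivalently M itself is symplectic) if and only if M_XX M_PP − M_XP M_XP = Iₙ and M_PX M_PP = M_PP M_XP. -/

import Mathlib

open Matrix Set

noncomputable section

variable {m : Type*} [Fintype m] [DecidableEq m]

lemma psd_posDef_of_isUnit {A : Matrix m m ℝ} (h : A.PosSemidef) (hu : IsUnit A) : A.PosDef := by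
  refine posDef_iff_dotProduct_mulVec.mpr ⟨h.1, fun x hx => ?_⟩
  rcases lt_or_eq_of_le (h.dotProduct_mulVec_nonneg x) with h' | h'
  · exact h'
  · exfalso
    have hz : A *ᵥ x = 0 := (h.dotProduct_mulVec_zero_iff x).mp h'.symm
    have hinj := Matrix.mulVec_injective_iff_isUnit.mpr hu
    exact hx (by simpa using hinj (hz.trans (Matrix.mulVec_zero A).symm))

open scoped MatrixOrder in
def Matrix.PosSemidef.sqrt {A : Matrix m m ℝ} (_hA : A.PosSemidef) : Matrix m m ℝ := CFC.sqrt A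

open scoped MatrixOrder in
lemma Matrix.PosSemidef.posSemidef_sqrt {A : Matrix m m ℝ} (hA : A.PosSemidef) :
    hA.sqrt.PosSemidef :=
  Matrix.nonneg_iff_posSemidef.mp (CFC.sqrt_nonneg A)

open scoped MatrixOrder in
lemma Matrix.PosSemidef.sq_sqrt {A : Matrix m m ℝ} (hA : A.PosSemidef) : hA.sqrt ^ 2 = A :=
  CFC.sq_sqrt A hA.nonneg

lemma Matrix.PosSemidef.sqrt_mul_self {A : Matrix m m ℝ} (hA : A.PosSemidef) :
    hA.sqrt * hA.sqrt = A :=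
  (sq _).symm.trans hA.sq_sqrt

open scoped MatrixOrder in
lemma Matrix.PosSemidef.eq_of_sq_eq_sq {A B : Matrix m m ℝ} (hA : A.PosSemidef)
    (hB : B.PosSemidef) (h : A ^ 2 = B ^ 2) : A = B := by
  rw [← CFC.sqrt_sq A hA.nonneg, h, CFC.sqrt_sq B hB.nonneg]

lemma sqrt_posDef {A : Matrix m m ℝ} (hA : A.PosDef) : hA.posSemidef.sqrt.PosDef := by
  apply psd_posDef_of_isUnit hA.posSemidef.posSemidef_sqrt
  rw [Matrix.isUnit_iff_isUnit_det]
  have : hA.posSemidef.sqrt.det ^ 2 = A.det := by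
    rw [← Matrix.det_pow, hA.posSemidef.sq_sqrt]
  have hd : A.det ≠ 0 := hA.det_pos.ne'
  exact isUnit_iff_ne_zero.mpr (fun h0 => hd (by rw [← this, h0, zero_pow two_ne_zero]))

lemma quad_le_of_sublevel_subset {A B : Matrix m m ℝ} (hA : A.PosDef) {c : ℝ} (hc : 0 < c)
    (h : {z : m → ℝ | A *ᵥ z ⬝ᵥ z ≤ c} ⊆ {z | B *ᵥ z ⬝ᵥ z ≤ c}) :
    ∀ z, B *ᵥ z ⬝ᵥ z ≤ A *ᵥ z ⬝ᵥ z := by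
  intro z
  by_cases hz : z = 0
  · simp [hz]
  · have hq : 0 < A *ᵥ z ⬝ᵥ z := by
      have := hA.dotProduct_mulVec_pos hz
      simpa [dotProduct_comm] using this
    set t : ℝ := Real.sqrt (c / (A *ᵥ z ⬝ᵥ z)) with ht
    have ht2 : t ^ 2 = c / (A *ᵥ z ⬝ᵥ z) := Real.sq_sqrt (le_of_lt (div_pos hc hq))
    have htpos : 0 < t := Real.sqrt_pos.mpr (div_pos hc hq)
    have hmem : t • z ∈ {z : m → ℝ | A *ᵥ z ⬝ᵥ z ≤ c} := by
      have : A *ᵥ (t • z) ⬝ᵥ (t • z) = t ^ 2 * (A *ᵥ z ⬝ᵥ z) := by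
        rw [Matrix.mulVec_smul, smul_dotProduct, dotProduct_smul, smul_smul, smul_eq_mul, sq]
      simp only [Set.mem_setOf_eq, this, ht2]
      rw [div_mul_cancel₀ _ hq.ne']
    have hB := h hmem
    have hBz : B *ᵥ (t • z) ⬝ᵥ (t • z) = t ^ 2 * (B *ᵥ z ⬝ᵥ z) := by
      rw [Matrix.mulVec_smul, smul_dotProduct, dotProduct_smul, smul_smul, smul_eq_mul, sq]
    rw [Set.mem_setOf_eq, hBz, ht2] at hB
    rw [div_mul_eq_mul_div, div_le_iff₀ hq] at hB
    exact le_of_mul_le_mul_left hB hc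

lemma symm_quad_zero {C : Matrix m m ℝ} (hC : Cᵀ = C) (h : ∀ z, C *ᵥ z ⬝ᵥ z = 0) : C = 0 := by
  have hbil : ∀ z w : m → ℝ, C *ᵥ z ⬝ᵥ w = 0 := by
    intro z w
    have hzw := h (z + w)
    have hz := h z
    have hw := h w
    have hexp : C *ᵥ (z + w) ⬝ᵥ (z + w)
        = C *ᵥ z ⬝ᵥ z + C *ᵥ z ⬝ᵥ w + C *ᵥ w ⬝ᵥ z + C *ᵥ w ⬝ᵥ w := by
      rw [Matrix.mulVec_add, add_dotProduct, dotProduct_add, dotProduct_add]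
      ring
    have hsymm : C *ᵥ w ⬝ᵥ z = C *ᵥ z ⬝ᵥ w := by
      rw [dotProduct_comm, Matrix.dotProduct_mulVec, ← Matrix.mulVec_transpose, hC,
        dotProduct_comm]
    rw [hexp, hz, hw, hsymm] at hzw
    linarith
  have hmv : ∀ z, C *ᵥ z = 0 := by
    intro z
    have := hbil z (C *ᵥ z)
    exact dotProduct_self_eq_zero.mp (by rwa [dotProduct_comm] at this)
  ext i j
  have := congrFun (hmv (Pi.single j 1)) i
  simpa [Matrix.mulVec_single] using this

lemma posdef_eq_of_sublevel_eq {A B : Matrix m m ℝ} (hA : A.PosDef) (hB : B.PosDef) {c : ℝ}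
    (hc : 0 < c)
    (h : {z : m → ℝ | A *ᵥ z ⬝ᵥ z ≤ c} = {z | B *ᵥ z ⬝ᵥ z ≤ c}) : A = B := by
  have h1 := quad_le_of_sublevel_subset hA hc h.subset
  have h2 := quad_le_of_sublevel_subset hB hc h.symm.subset
  have heq : ∀ z, (A - B) *ᵥ z ⬝ᵥ z = 0 := by
    intro z
    rw [Matrix.sub_mulVec, sub_dotProduct]
    exact sub_eq_zero.mpr (le_antisymm (h2 z) (h1 z))
  have hAt : Aᵀ = A := by
    have := hA.isHermitian; rwa [Matrix.IsHermitian, conjTranspose_eq_transpose_of_trivial] at this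
  have hBt : Bᵀ = B := by
    have := hB.isHermitian; rwa [Matrix.IsHermitian, conjTranspose_eq_transpose_of_trivial] at this
  have := symm_quad_zero (C := A - B) (by rw [Matrix.transpose_sub, hAt, hBt]) heq
  exact sub_eq_zero.mp this

lemma image_ball_eq (S : Matrix m m ℝ) (hS : IsUnit S) (c : ℝ) :
    (fun z => S *ᵥ z) '' {z : m → ℝ | z ⬝ᵥ z ≤ c}
      = {w : m → ℝ | (S * Sᵀ)⁻¹ *ᵥ w ⬝ᵥ w ≤ c} := by
  have hdet : IsUnit S.det := (Matrix.isUnit_iff_isUnit_det S).mp hS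
  have hinv : S⁻¹ * S = 1 := Matrix.nonsing_inv_mul S hdet
  have hinv' : S * S⁻¹ = 1 := Matrix.mul_nonsing_inv S hdet
  have hkey : ∀ w : m → ℝ, (S * Sᵀ)⁻¹ *ᵥ w ⬝ᵥ w = (S⁻¹ *ᵥ w) ⬝ᵥ (S⁻¹ *ᵥ w) := by
    intro w
    have : (S * Sᵀ)⁻¹ = (S⁻¹)ᵀ * S⁻¹ := by
      rw [Matrix.mul_inv_rev, Matrix.transpose_nonsing_inv]
    rw [this, ← Matrix.mulVec_mulVec, dotProduct_comm, Matrix.dotProduct_mulVec,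
      ← Matrix.mulVec_transpose, Matrix.transpose_transpose, dotProduct_comm]
  ext w
  constructor
  · rintro ⟨z, hz, rfl⟩
    simp only [Set.mem_setOf_eq, hkey]
    rwa [Matrix.mulVec_mulVec, hinv, Matrix.one_mulVec]
  · intro hw
    refine ⟨S⁻¹ *ᵥ w, by simpa [hkey] using hw, ?_⟩
    simp [Matrix.mulVec_mulVec, hinv', Matrix.one_mulVec]


/-- The standard symplectic matrix `J = [[0, I],[-I, 0]]` on `ℝ²ⁿ = ℝⁿ ⊕ ℝⁿ`. -/
def J (n : ℕ) : Matrix (Fin n ⊕ Fin n) (Fin n ⊕ Fin n) ℝ :=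
  Matrix.fromBlocks 0 1 (-1) 0

/-- `S ∈ Sp(n)` iff `Sᵀ J S = J`. -/
def IsSymplectic {n : ℕ} (S : Matrix (Fin n ⊕ Fin n) (Fin n ⊕ Fin n) ℝ) : Prop :=
  Sᵀ * J n * S = J n

/-- The closed ball `B²ⁿ(√ℏ) = {z : z·z ≤ ℏ}` of radius `√ℏ` centered at `0`. -/
def ballh (n : ℕ) (ℏ : ℝ) : Set (Fin n ⊕ Fin n → ℝ) :=
  {z | z ⬝ᵥ z ≤ ℏ}

variable {n : ℕ}

lemma Jsym_mul_Jn : _root_.J n * _root_.J n = -1 := by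
  simp [_root_.J, Matrix.fromBlocks_multiply, Matrix.fromBlocks_neg, ← Matrix.fromBlocks_one]

lemma Jsym_transpose : (_root_.J n)ᵀ = -(_root_.J n) := by
  simp [_root_.J, Matrix.fromBlocks_transpose, Matrix.fromBlocks_neg]

lemma Jsym_mul_Jnt : _root_.J n * (_root_.J n)ᵀ = 1 := by
  rw [Jsym_transpose, mul_neg, Jsym_mul_Jn, neg_neg]

lemma Jnt_mul_Jn : (_root_.J n)ᵀ * _root_.J n = 1 := by
  rw [Jsym_transpose, neg_mul, Jsym_mul_Jn, neg_neg]

lemma Jsym_isUnit : IsUnit (_root_.J n) :=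
  ⟨⟨_root_.J n, (_root_.J n)ᵀ, Jsym_mul_Jnt, Jnt_mul_Jn⟩, rfl⟩

lemma symplectic_isUnit {S : Matrix (Fin n ⊕ Fin n) (Fin n ⊕ Fin n) ℝ}
    (hS : IsSymplectic S) : IsUnit S := by
  rw [Matrix.isUnit_iff_isUnit_det]
  have hdJ : IsUnit (_root_.J n).det := (Matrix.isUnit_iff_isUnit_det _).mp Jsym_isUnit
  have := congrArg Matrix.det hS
  rw [Matrix.det_mul, Matrix.det_mul, Matrix.det_transpose] at this
  rcases hdJ with ⟨u, hu⟩
  have hS2 : S.det * S.det = 1 := by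
    have h' : (_root_.J n).det * (S.det * S.det) = (_root_.J n).det * 1 := by rw [mul_one]; linarith [this]
    exact mul_left_cancel₀ (by rw [← hu]; exact u.ne_zero) h'
  exact ⟨⟨S.det, S.det, hS2, hS2⟩, rfl⟩

lemma symplectic_mul {S T : Matrix (Fin n ⊕ Fin n) (Fin n ⊕ Fin n) ℝ}
    (hS : IsSymplectic S) (hT : IsSymplectic T) : IsSymplectic (S * T) := by
  unfold IsSymplectic at *
  rw [Matrix.transpose_mul]
  calc Tᵀ * Sᵀ * _root_.J n * (S * T) = Tᵀ * (Sᵀ * _root_.J n * S) * T := by noncomm_ring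
    _ = Tᵀ * _root_.J n * T := by rw [hS]
    _ = _root_.J n := hT

lemma symplectic_transpose {S : Matrix (Fin n ⊕ Fin n) (Fin n ⊕ Fin n) ℝ}
    (hS : IsSymplectic S) : IsSymplectic Sᵀ := by
  have hu := symplectic_isUnit hS
  have hdet : IsUnit S.det := (Matrix.isUnit_iff_isUnit_det S).mp hu
  have hinv : S * S⁻¹ = 1 := Matrix.mul_nonsing_inv S hdet
  have hST : Sᵀ = _root_.J n * S⁻¹ * (_root_.J n)ᵀ := by
    have h1 : Sᵀ * _root_.J n * (S * S⁻¹) = _root_.J n * S⁻¹ := by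
      rw [← mul_assoc, hS]
    rw [hinv, mul_one] at h1
    calc Sᵀ = Sᵀ * (_root_.J n * (_root_.J n)ᵀ) := by rw [Jsym_mul_Jnt, mul_one]
      _ = (Sᵀ * _root_.J n) * (_root_.J n)ᵀ := by noncomm_ring
      _ = _root_.J n * S⁻¹ * (_root_.J n)ᵀ := by rw [h1]
  unfold IsSymplectic
  rw [Matrix.transpose_transpose, hST]
  calc S * _root_.J n * (_root_.J n * S⁻¹ * (_root_.J n)ᵀ) = S * (_root_.J n * _root_.J n) * S⁻¹ * (_root_.J n)ᵀ := by noncomm_ring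
    _ = -((S * S⁻¹) * (_root_.J n)ᵀ) := by rw [Jsym_mul_Jn, mul_neg_one, neg_mul, neg_mul]
    _ = -(_root_.J n)ᵀ := by rw [hinv, one_mul]
    _ = _root_.J n := by rw [Jsym_transpose, neg_neg]

lemma symplectic_inv {S : Matrix (Fin n ⊕ Fin n) (Fin n ⊕ Fin n) ℝ}
    (hS : IsSymplectic S) : IsSymplectic S⁻¹ := by
  have hu := symplectic_isUnit hS
  have hdet : IsUnit S.det := (Matrix.isUnit_iff_isUnit_det S).mp hu
  have hdetT : IsUnit Sᵀ.det := by rwa [Matrix.det_transpose]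
  have hinv : S * S⁻¹ = 1 := Matrix.mul_nonsing_inv S hdet
  have hinvT : (Sᵀ)⁻¹ * Sᵀ = 1 := Matrix.nonsing_inv_mul Sᵀ hdetT
  unfold IsSymplectic at *
  rw [Matrix.transpose_nonsing_inv]
  calc (Sᵀ)⁻¹ * _root_.J n * S⁻¹ = (Sᵀ)⁻¹ * (Sᵀ * _root_.J n * S) * S⁻¹ := by rw [hS]
    _ = ((Sᵀ)⁻¹ * Sᵀ) * _root_.J n * (S * S⁻¹) := by noncomm_ring
    _ = _root_.J n := by rw [hinv, hinvT, one_mul, mul_one]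

lemma sqrt_symplectic {P : Matrix (Fin n ⊕ Fin n) (Fin n ⊕ Fin n) ℝ}
    (hP : P.PosDef) (hS : IsSymplectic P) : IsSymplectic hP.posSemidef.sqrt := by
  set Q := hP.posSemidef.sqrt with hQdef
  have hPt : Pᵀ = P := by
    have := hP.isHermitian
    rwa [Matrix.IsHermitian, conjTranspose_eq_transpose_of_trivial] at this
  have hPJP : P * _root_.J n * P = _root_.J n := by
    have := hS; unfold IsSymplectic at this; rwa [hPt] at this
  have hPdet : IsUnit P.det := (Matrix.isUnit_iff_isUnit_det P).mp hP.isUnit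
  have hPinv : P⁻¹ * P = 1 := Matrix.nonsing_inv_mul P hPdet
  have hQ2 : Q * Q = P := hP.posSemidef.sqrt_mul_self
  have hQpd : Q.PosDef := sqrt_posDef hP
  have hQt : Qᵀ = Q := by
    have := hQpd.isHermitian
    rwa [Matrix.IsHermitian, conjTranspose_eq_transpose_of_trivial] at this
  have hQdet : IsUnit Q.det := (Matrix.isUnit_iff_isUnit_det Q).mp hQpd.isUnit
  have hQinv : Q * Q⁻¹ = 1 := Matrix.mul_nonsing_inv Q hQdet
  -- J P Jᵀ = P⁻¹
  have hJP : _root_.J n * P * (_root_.J n)ᵀ = P⁻¹ := by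
    have h1 : _root_.J n * P = P⁻¹ * _root_.J n := by
      calc _root_.J n * P = (P⁻¹ * P) * _root_.J n * P := by rw [hPinv, one_mul]
        _ = P⁻¹ * (P * _root_.J n * P) := by noncomm_ring
        _ = P⁻¹ * _root_.J n := by rw [hPJP]
    rw [h1, mul_assoc, Jsym_mul_Jnt, mul_one]
  set R := _root_.J n * Q * (_root_.J n)ᵀ with hRdef
  have hRpsd : R.PosSemidef := by
    have := hQpd.posSemidef.mul_mul_conjTranspose_same (_root_.J n)
    rwa [conjTranspose_eq_transpose_of_trivial] at this
  have hR2 : R ^ 2 = P⁻¹ := by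
    calc R ^ 2 = _root_.J n * Q * ((_root_.J n)ᵀ * _root_.J n) * Q * (_root_.J n)ᵀ := by rw [sq, hRdef]; noncomm_ring
      _ = _root_.J n * (Q * Q) * (_root_.J n)ᵀ := by rw [Jnt_mul_Jn, mul_one]; noncomm_ring
      _ = P⁻¹ := by rw [hQ2, hJP]
  have hQi2 : (Q⁻¹) ^ 2 = P⁻¹ := by
    rw [sq, ← Matrix.mul_inv_rev, hQ2]
  have hReq : R = Q⁻¹ :=
    hRpsd.eq_of_sq_eq_sq hQpd.inv.posSemidef (by rw [hR2, hQi2])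
  have hQJQ : Q * _root_.J n * Q = _root_.J n := by
    have h2 : Q * (_root_.J n * Q * (_root_.J n)ᵀ) = 1 := by rw [← hRdef, hReq, hQinv]
    calc Q * _root_.J n * Q = Q * _root_.J n * Q * ((_root_.J n)ᵀ * _root_.J n) := by rw [Jnt_mul_Jn, mul_one]
      _ = (Q * (_root_.J n * Q * (_root_.J n)ᵀ)) * _root_.J n := by noncomm_ring
      _ = _root_.J n := by rw [h2, one_mul]
  unfold IsSymplectic
  rwa [hQt]

lemma posDef_block22 {A B C D : Matrix (Fin n) (Fin n) ℝ}
    (hM : (Matrix.fromBlocks A B C D).PosDef) : D.PosDef := by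
  have hMt : (Matrix.fromBlocks A B C D)ᵀ = Matrix.fromBlocks A B C D := by
    have := hM.isHermitian
    rwa [Matrix.IsHermitian, conjTranspose_eq_transpose_of_trivial] at this
  refine posDef_iff_dotProduct_mulVec.mpr ⟨?_, ?_⟩
  · rw [Matrix.IsHermitian, conjTranspose_eq_transpose_of_trivial]
    have := congrArg Matrix.toBlocks₂₂ hMt
    rwa [Matrix.fromBlocks_transpose, Matrix.toBlocks_fromBlocks₂₂,
      Matrix.toBlocks_fromBlocks₂₂] at this
  · intro y hy
    have hz : (Sum.elim 0 y : Fin n ⊕ Fin n → ℝ) ≠ 0 := by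
      intro h
      apply hy
      ext i
      exact congrFun h (Sum.inr i)
    have := hM.dotProduct_mulVec_pos hz
    rw [star_trivial, Matrix.fromBlocks_mulVec] at this
    simp only [Sum.elim_comp_inl, Sum.elim_comp_inr, Matrix.mulVec_zero, zero_add,
      sumElim_dotProduct_sumElim, zero_dotProduct] at this
    simpa using this

lemma symplectic_block_iff {A B C D : Matrix (Fin n) (Fin n) ℝ}
    (hM : (Matrix.fromBlocks A B C D).PosDef) :
    IsSymplectic (Matrix.fromBlocks A B C D) ↔ (A * D - B * B = 1 ∧ C * D = D * B) := by
  have hMt : (Matrix.fromBlocks A B C D)ᵀ = Matrix.fromBlocks A B C D := by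
    have := hM.isHermitian
    rwa [Matrix.IsHermitian, conjTranspose_eq_transpose_of_trivial] at this
  rw [Matrix.fromBlocks_transpose] at hMt
  have hAt : Aᵀ = A := by
    have := congrArg Matrix.toBlocks₁₁ hMt
    simpa [Matrix.toBlocks_fromBlocks₁₁] using this
  have hCt : Cᵀ = B := by
    have := congrArg Matrix.toBlocks₁₂ hMt
    simpa [Matrix.toBlocks_fromBlocks₁₂] using this
  have hBt : Bᵀ = C := by
    have := congrArg Matrix.toBlocks₂₁ hMt
    simpa [Matrix.toBlocks_fromBlocks₂₁] using this
  have hDt : Dᵀ = D := by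
    have := congrArg Matrix.toBlocks₂₂ hMt
    simpa [Matrix.toBlocks_fromBlocks₂₂] using this
  have hprod : (Matrix.fromBlocks A B C D)ᵀ * _root_.J n * (Matrix.fromBlocks A B C D)
      = Matrix.fromBlocks (-(B*A) + A*C) (-(B*B) + A*D) (-(D*A) + C*C) (-(D*B) + C*D) := by
    rw [Matrix.fromBlocks_transpose, hAt, hBt, hCt, hDt, _root_.J,
      Matrix.fromBlocks_multiply, Matrix.fromBlocks_multiply]
    congr 1 <;> simp <;> noncomm_ring
  have hJeq : (_root_.J n : Matrix (Fin n ⊕ Fin n) (Fin n ⊕ Fin n) ℝ)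
      = Matrix.fromBlocks 0 1 (-1) 0 := rfl
  unfold IsSymplectic
  rw [hprod, hJeq, Matrix.fromBlocks_inj]
  constructor
  · rintro ⟨-, h12, -, h22⟩
    constructor
    · rw [← h12]; noncomm_ring
    · have : C * D = D * B := by
        have := h22
        rw [neg_add_eq_zero] at this
        exact this.symm
      exact this
  · rintro ⟨h1, h2⟩
    have hD : D.PosDef := posDef_block22 hM
    have hDdet : IsUnit D.det := (Matrix.isUnit_iff_isUnit_det D).mp hD.isUnit
    have hDinv : D * D⁻¹ = 1 := Matrix.mul_nonsing_inv D hDdet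
    have hAD : A * D = 1 + B * B := by rw [← h1]; noncomm_ring
    have h11 : -(B*A) + A*C = 0 := by
      have hX : (A * C - B * A) * D = 0 := by
        calc (A * C - B * A) * D = A * (C * D) - B * (A * D) := by noncomm_ring
          _ = A * (D * B) - B * (1 + B * B) := by rw [h2, hAD]
          _ = (A * D) * B - B * (1 + B * B) := by rw [← mul_assoc]
          _ = (1 + B * B) * B - B * (1 + B * B) := by rw [hAD]
          _ = 0 := by noncomm_ring
      have : A * C - B * A = 0 := by
        calc A * C - B * A = ((A * C - B * A) * D) * D⁻¹ := by
              rw [mul_assoc, hDinv, mul_one]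
          _ = 0 := by rw [hX, Matrix.zero_mul]
      rw [← this]; noncomm_ring
    have h21 : -(D*A) + C*C = -1 := by
      have := congrArg Matrix.transpose h1
      rw [Matrix.transpose_sub, Matrix.transpose_mul, Matrix.transpose_mul,
        hAt, hBt, hDt, Matrix.transpose_one] at this
      rw [← this]; noncomm_ring
    exact ⟨h11, by rw [← h1]; noncomm_ring, h21, by rw [h2]; abel⟩

/-- for a symmetric positive definite block matrix
`M = [[MXX, MXP],[MPX, MPP]]`, the ellipsoid `Ω = {z : Mz·z ≤ ℏ}` is a quantum blob
(`Ω = S(B²ⁿ(√ℏ))` for some `S ∈ Sp(n)`) if and only if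
`MXX MPP − MXP MXP = I` and `MPX MPP = MPP MXP`. -/
theorem quantum_blob_iff_block_relations
    {n : ℕ} (ℏ : ℝ) (hℏ : 0 < ℏ)
    (MXX MXP MPX MPP : Matrix (Fin n) (Fin n) ℝ)
    (hM : (Matrix.fromBlocks MXX MXP MPX MPP).PosDef)
    (Ω : Set (Fin n ⊕ Fin n → ℝ))
    (hΩ : Ω = {z | (Matrix.fromBlocks MXX MXP MPX MPP).mulVec z ⬝ᵥ z ≤ ℏ}) :
    (∃ S : Matrix (Fin n ⊕ Fin n) (Fin n ⊕ Fin n) ℝ,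
        IsSymplectic S ∧ Ω = (fun z => S.mulVec z) '' ballh n ℏ)
      ↔ (MXX * MPP - MXP * MXP = 1 ∧ MPX * MPP = MPP * MXP) := by
  set M := Matrix.fromBlocks MXX MXP MPX MPP with hMdef
  rw [← symplectic_block_iff hM]
  have hball : ballh n ℏ = {z : Fin n ⊕ Fin n → ℝ | z ⬝ᵥ z ≤ ℏ} := rfl
  constructor
  · rintro ⟨S, hS, him⟩
    have hSu := symplectic_isUnit hS
    have him2 : Ω = {w | (S * Sᵀ)⁻¹ *ᵥ w ⬝ᵥ w ≤ ℏ} := by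
      rw [him, hball, image_ball_eq S hSu ℏ]
    have hNpsd : (S * Sᵀ).PosSemidef := by
      have := Matrix.posSemidef_self_mul_conjTranspose S
      rwa [conjTranspose_eq_transpose_of_trivial] at this
    have hNu : IsUnit (S * Sᵀ) := by
      rw [Matrix.isUnit_iff_isUnit_det, Matrix.det_mul, Matrix.det_transpose]
      exact ((Matrix.isUnit_iff_isUnit_det S).mp hSu).mul ((Matrix.isUnit_iff_isUnit_det S).mp hSu)
    have hN : (S * Sᵀ).PosDef := psd_posDef_of_isUnit hNpsd hNu
    have heq : M = (S * Sᵀ)⁻¹ := by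
      apply posdef_eq_of_sublevel_eq hM hN.inv hℏ
      rw [← him2, hΩ]
    rw [← hMdef, heq]
    exact symplectic_inv (symplectic_mul hS (symplectic_transpose hS))
  · intro hMs
    have hP : (M⁻¹).PosDef := hM.inv
    have hPs : IsSymplectic M⁻¹ := symplectic_inv hMs
    set Q := hP.posSemidef.sqrt with hQdef
    have hQs : IsSymplectic Q := sqrt_symplectic hP hPs
    have hQpd : Q.PosDef := sqrt_posDef hP
    have hQt : Qᵀ = Q := by
      have := hQpd.isHermitian
      rwa [Matrix.IsHermitian, conjTranspose_eq_transpose_of_trivial] at this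
    refine ⟨Q, hQs, ?_⟩
    rw [hball, image_ball_eq Q hQpd.isUnit ℏ, hQt, hP.posSemidef.sqrt_mul_self,
      Matrix.nonsing_inv_nonsing_inv M ((Matrix.isUnit_iff_isUnit_det M).mp hM.isUnit), hΩ]
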